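/- For every positive integer a, ∫₀¹ ((ax))((x))⁵ dx = (16 - 28a² + 21a⁴)/(4032a⁵). -/

import Mathlib

open Real

/-- The sawtooth (first Bernoulli) function `((x))`. -/
noncomputable def saw (x : ℝ) : ℝ := if Int.fract x = 0 then 0 else Int.fract x - 1/2

open MeasureTheory intervalIntegral in
lemma sum_piece (A : ℝ) (hA : A ≠ 0) (n : ℕ) :
    ∑ k ∈ Finset.range n,
      (A * ((((k:ℝ)+1)/A - 1/2)^7 - ((k:ℝ)/A - 1/2)^7)/7
        + (A/2 - (k:ℝ) - 1/2) * ((((k:ℝ)+1)/A - 1/2)^6 - ((k:ℝ)/A - 1/2)^6)/6)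
    = ((n:ℝ)/252 - (n:ℝ)^3/36 + (n:ℝ)^5/12 + A*(n:ℝ)^2/24 - 5*A*(n:ℝ)^4/24
        - A^2*(n:ℝ)/48 + 5*A^2*(n:ℝ)^3/24 - 5*A^3*(n:ℝ)^2/48 + 5*A^4*(n:ℝ)/192)/A^6 := by
  induction n with
  | zero => simp
  | succ m ih =>
      rw [Finset.sum_range_succ, ih]
      push_cast
      field_simp
      ring

lemma saw_key (a k : ℕ) (ha : 0 < a) (hk : k < a) :
    ∀ x ∈ Set.Ioo ((k:ℝ)/(a:ℝ)) (((k:ℝ)+1)/(a:ℝ)),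
      saw ((a:ℝ)*x) * (saw x)^5 = ((a:ℝ)*x - (k:ℝ) - 1/2) * (x - 1/2)^5 := by
  intro x hx
  have hA : (0:ℝ) < (a:ℝ) := by exact_mod_cast ha
  have h1 : (k:ℝ) < (a:ℝ)*x := by
    have := hx.1
    rw [div_lt_iff₀ hA] at this
    linarith [this]
  have h2 : (a:ℝ)*x < (k:ℝ)+1 := by
    have := hx.2
    rw [lt_div_iff₀ hA] at this
    linarith [this]
  have hx0 : 0 < x := lt_of_le_of_lt (by positivity) hx.1
  have hx1 : x < 1 := by
    have hk1 : ((k:ℝ)+1)/(a:ℝ) ≤ 1 := by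
      rw [div_le_one hA]
      exact_mod_cast hk
    exact lt_of_lt_of_le hx.2 hk1
  have hfl : ⌊(a:ℝ)*x⌋ = (k:ℤ) := by
    rw [Int.floor_eq_iff]
    constructor
    · push_cast; linarith
    · push_cast; linarith
  have hfr : Int.fract ((a:ℝ)*x) = (a:ℝ)*x - (k:ℝ) := by
    rw [Int.fract, hfl]; push_cast; ring
  have hfrx : Int.fract x = x := Int.fract_eq_self.mpr ⟨le_of_lt hx0, hx1⟩
  rw [saw, saw, hfr, hfrx, if_neg (by linarith), if_neg (by linarith)]

lemma saw_ae (a k : ℕ) (ha : 0 < a) (hk : k < a) :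
    ∀ᵐ x, x ∈ Set.Ioc ((k:ℝ)/(a:ℝ)) (((k:ℝ)+1)/(a:ℝ)) →
      saw ((a:ℝ)*x) * (saw x)^5 = ((a:ℝ)*x - (k:ℝ) - 1/2) * (x - 1/2)^5 := by
  have h0 : ({((k:ℝ)+1)/(a:ℝ)}ᶜ : Set ℝ) ∈ MeasureTheory.ae MeasureTheory.volume :=
    MeasureTheory.compl_mem_ae_iff.mpr (Real.volume_singleton)
  filter_upwards [h0] with x hx hmem
  exact saw_key a k ha hk x ⟨hmem.1, lt_of_le_of_ne hmem.2 hx⟩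

lemma piece_le (a k : ℕ) (ha : 0 < a) : ((k:ℝ)/(a:ℝ)) ≤ (((k:ℝ)+1)/(a:ℝ)) := by
  have hA : (0:ℝ) < (a:ℝ) := by exact_mod_cast ha
  exact (div_le_div_iff_of_pos_right hA).mpr (by linarith)

lemma piece_integrable (a k : ℕ) (ha : 0 < a) (hk : k < a) :
    IntervalIntegrable (fun x => saw ((a:ℝ)*x) * (saw x)^5)
      MeasureTheory.volume ((k:ℝ)/(a:ℝ)) (((k:ℝ)+1)/(a:ℝ)) := by
  rw [intervalIntegrable_iff, Set.uIoc_of_le (piece_le a k ha)]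
  have hg : MeasureTheory.IntegrableOn
      (fun x => ((a:ℝ)*x - (k:ℝ) - 1/2) * (x - 1/2)^5)
      (Set.Ioc ((k:ℝ)/(a:ℝ)) (((k:ℝ)+1)/(a:ℝ))) := by
    apply Continuous.integrableOn_Ioc
    continuity
  apply hg.congr
  apply (MeasureTheory.ae_restrict_iff' measurableSet_Ioc).mpr
  filter_upwards [saw_ae a k ha hk] with x hx hmem
  exact (hx hmem).symm

lemma piece_int (a k : ℕ) (ha : 0 < a) (hk : k < a) :
    ∫ x in ((k:ℝ)/(a:ℝ))..(((k:ℝ)+1)/(a:ℝ)), saw ((a:ℝ)*x) * (saw x)^5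
    = (a:ℝ) * ((((k:ℝ)+1)/(a:ℝ) - 1/2)^7 - ((k:ℝ)/(a:ℝ) - 1/2)^7)/7
        + ((a:ℝ)/2 - (k:ℝ) - 1/2) * ((((k:ℝ)+1)/(a:ℝ) - 1/2)^6 - ((k:ℝ)/(a:ℝ) - 1/2)^6)/6 := by
  have hcong : ∫ x in ((k:ℝ)/(a:ℝ))..(((k:ℝ)+1)/(a:ℝ)), saw ((a:ℝ)*x) * (saw x)^5
      = ∫ x in ((k:ℝ)/(a:ℝ))..(((k:ℝ)+1)/(a:ℝ)), ((a:ℝ)*x - (k:ℝ) - 1/2) * (x - 1/2)^5 := by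
    apply intervalIntegral.integral_congr_ae
    filter_upwards [saw_ae a k ha hk] with x hx hmem
    rw [Set.uIoc_of_le (piece_le a k ha)] at hmem
    exact hx hmem
  rw [hcong]
  set c : ℝ := (a:ℝ)/2 - (k:ℝ) - 1/2 with hc
  have hderiv : ∀ x ∈ Set.uIcc ((k:ℝ)/(a:ℝ)) (((k:ℝ)+1)/(a:ℝ)),
      HasDerivAt (fun x : ℝ => (a:ℝ)*(x - 1/2)^7/7 + c*(x - 1/2)^6/6)
        (((a:ℝ)*x - (k:ℝ) - 1/2) * (x - 1/2)^5) x := by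
    intro x _
    have h : HasDerivAt (fun x : ℝ => x - 1/2) 1 x := (hasDerivAt_id x).sub_const _
    have h7 := h.pow 7
    have h6 := h.pow 6
    have := ((h7.const_mul ((a:ℝ))).div_const 7).add ((h6.const_mul c).div_const 6)
    convert this using 1
    · rfl
    · rfl
    · rfl
    push_cast
    rw [hc]
    ring
  have hint : IntervalIntegrable (fun x : ℝ => ((a:ℝ)*x - (k:ℝ) - 1/2) * (x - 1/2)^5)
      MeasureTheory.volume ((k:ℝ)/(a:ℝ)) (((k:ℝ)+1)/(a:ℝ)) := by
    apply Continuous.intervalIntegrable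
    continuity
  rw [intervalIntegral.integral_eq_sub_of_hasDerivAt hderiv hint]
  ring

theorem franel_a1x5 (a : ℕ) (ha : 0 < a) :
    ∫ x in (0:ℝ)..1, saw (a * x) * (saw x)^5 =
      (16 - 28 * (a:ℝ)^2 + 21 * (a:ℝ)^4) / (4032 * (a:ℝ)^5) := by
  have hA : (0:ℝ) < (a:ℝ) := by exact_mod_cast ha
  have hA0 : (a:ℝ) ≠ 0 := ne_of_gt hA
  have hsplit := intervalIntegral.sum_integral_adjacent_intervals
    (f := fun x => saw ((a:ℝ)*x) * (saw x)^5) (μ := MeasureTheory.volume)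
    (a := fun k : ℕ => (k:ℝ)/(a:ℝ)) (n := a) ?_
  · have h0 : ((0:ℕ):ℝ)/(a:ℝ) = 0 := by simp
    have h1 : ((a:ℕ):ℝ)/(a:ℝ) = 1 := div_self hA0
    rw [h0, h1] at hsplit
    have hpieces : ∑ k ∈ Finset.range a,
        ∫ x in ((k:ℝ)/(a:ℝ))..((((k:ℕ)+1:ℕ):ℝ)/(a:ℝ)), saw ((a:ℝ)*x) * (saw x)^5
        = ∑ k ∈ Finset.range a,
          ((a:ℝ) * ((((k:ℝ)+1)/(a:ℝ) - 1/2)^7 - ((k:ℝ)/(a:ℝ) - 1/2)^7)/7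
            + ((a:ℝ)/2 - (k:ℝ) - 1/2) * ((((k:ℝ)+1)/(a:ℝ) - 1/2)^6 - ((k:ℝ)/(a:ℝ) - 1/2)^6)/6) := by
      apply Finset.sum_congr rfl
      intro k hk
      have hk' : k < a := Finset.mem_range.mp hk
      have : (((k:ℕ)+1:ℕ):ℝ) = (k:ℝ)+1 := by push_cast; ring
      rw [this]
      exact piece_int a k ha hk'
    rw [hpieces, sum_piece (a:ℝ) hA0 a] at hsplit
    rw [← hsplit]
    field_simp
    ring
  · intro k hk
    simp only [Nat.cast_add, Nat.cast_one]
    exact piece_integrable a k ha hk
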